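/- Let m ≥ 1, let ε ≥ 0, δ ≥ 0, λ > 0 and W > 0. Let f_i, f_j, f̃_i, f̃_j be probability measures on ℝ^m and let ζ be a probability measure on ℝ^m (the noise of an additive mechanism calibrated to the approximations). Suppose: (1) for every measurable S ⊆ ℝ^m, (f̃_i ∗ ζ)(S) ≤ e^ε · (f̃_j ∗ ζ)(S) + δ; and (2) for each θ ∈ {i, j} there exists a coupling γ_θ of f_θ and f̃_θ such that ‖x − y‖₁ ≤ W for γ_θ-almost every (x, y) (i.e., the ∞-Wasserstein distance between f_θ and f̃_θ is at most W). Then the mechanism that additionally adds independent Lapₘ(W/λ) noise satisfies: for every measurable S ⊆ ℝ^m, (f_i ∗ ζ ∗ Lapₘ(W/λ))(S) ≤ e^{ε + 2λ} · (f_j ∗ ζ ∗ Lapₘ(W/λ))(S) + e^λ·δ. -/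

import Mathlib

open MeasureTheory ProbabilityTheory

/-- The Laplace measure on `ℝ^m` with scale `b`: `m` i.i.d. Laplace(`b`) coordinates. -/
noncomputable def lapPi (m : ℕ) (b : ℝ) : Measure (Fin m → ℝ) :=
  MeasureTheory.volume.withDensity
    (fun x => ENNReal.ofReal (∏ k, (1 / (2 * b)) * Real.exp (-|x k| / b)))

/-- Convolution of two measures on `ℝ^m`: the law of `X + Z` with `X ∼ μ`, `Z ∼ ν` independent. -/
noncomputable def mconv {m : ℕ} (μ ν : Measure (Fin m → ℝ)) : Measure (Fin m → ℝ) :=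
  (μ.prod ν).map (fun p => p.1 + p.2)

/-- The `L¹` norm on `ℝ^m`. -/
def l1norm {m : ℕ} (x : Fin m → ℝ) : ℝ := ∑ k, |x k|

/-- `γ` is a coupling of `μ` and `ν`. -/
def IsCoupling {m : ℕ} (γ : Measure ((Fin m → ℝ) × (Fin m → ℝ)))
    (μ ν : Measure (Fin m → ℝ)) : Prop :=
  γ.map Prod.fst = μ ∧ γ.map Prod.snd = ν

namespace PW

open Set Real

noncomputable def dens (m : ℕ) (b : ℝ) : (Fin m → ℝ) → ENNReal :=
  fun x => ENNReal.ofReal (∏ k, (1 / (2 * b)) * Real.exp (-|x k| / b))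

lemma dens_meas (m : ℕ) (b : ℝ) : Measurable (dens m b) := by
  apply Measurable.ennreal_ofReal
  apply Finset.measurable_prod
  intro k _
  exact measurable_const.mul (Real.measurable_exp.comp
    ((((measurable_pi_apply k).abs.neg : Measurable fun a : Fin m → ℝ => -|a k|).div_const b)))

lemma dens_shift_le {m : ℕ} {b lam W : ℝ} (hb : 0 < b) (hbW : W / b ≤ lam)
    (t u : Fin m → ℝ) (ht : l1norm t ≤ W) :
    dens m b (u - t) ≤ ENNReal.ofReal (Real.exp lam) * dens m b u := by
  simp only [dens]
  rw [← ENNReal.ofReal_mul (Real.exp_nonneg lam)]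
  apply ENNReal.ofReal_le_ofReal
  rw [Finset.prod_mul_distrib, Finset.prod_mul_distrib, ← Real.exp_sum, ← Real.exp_sum]
  have hC : (0:ℝ) ≤ ∏ _k : Fin m, (1 / (2 * b)) := by positivity
  have key : (∑ k, -|(u - t) k| / b) ≤ lam + ∑ k, -|u k| / b := by
    have h1 : ∀ k, -|(u - t) k| / b ≤ -|u k| / b + |t k| / b := by
      intro k
      rw [Pi.sub_apply]
      have := abs_sub_abs_le_abs_sub (u k) (t k)
      rw [← add_div, div_le_div_iff_of_pos_right hb]
      linarith
    calc (∑ k, -|(u - t) k| / b) ≤ ∑ k, (-|u k| / b + |t k| / b) :=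
          Finset.sum_le_sum fun k _ => h1 k
      _ = (∑ k, -|u k| / b) + (∑ k, |t k|) / b := by
          rw [Finset.sum_add_distrib, Finset.sum_div]
      _ ≤ (∑ k, -|u k| / b) + lam := by
          have : (∑ k, |t k|) / b ≤ W / b := by
            exact div_le_div_of_nonneg_right ht hb.le |>.trans_eq rfl
          linarith
      _ = lam + ∑ k, -|u k| / b := by ring
  calc (∏ _k : Fin m, (1 / (2 * b))) * Real.exp (∑ k, -|(u - t) k| / b)
      ≤ (∏ _k : Fin m, (1 / (2 * b))) * (Real.exp lam * Real.exp (∑ k, -|u k| / b)) := by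
        apply mul_le_mul_of_nonneg_left _ hC
        rw [← Real.exp_add]
        exact Real.exp_le_exp.mpr key
    _ = Real.exp lam * ((∏ _k : Fin m, (1 / (2 * b))) * Real.exp (∑ k, -|u k| / b)) := by ring


lemma lapPi_eq (m : ℕ) (b : ℝ) : lapPi m b = MeasureTheory.volume.withDensity (dens m b) := rfl

lemma lap_shift {m : ℕ} {b lam W : ℝ} (hb : 0 < b) (hbW : W / b ≤ lam)
    (t : Fin m → ℝ) (ht : l1norm t ≤ W) {S : Set (Fin m → ℝ)} (hS : MeasurableSet S) :
    lapPi m b ((fun w => t + w) ⁻¹' S) ≤ ENNReal.ofReal (Real.exp lam) * lapPi m b S := by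
  have hSt : MeasurableSet ((fun w => t + w) ⁻¹' S) := hS.preimage (measurable_const_add t)
  rw [lapPi_eq, withDensity_apply _ hSt, withDensity_apply _ hS,
    ← lintegral_indicator hSt (dens m b), ← lintegral_indicator hS (dens m b)]
  calc ∫⁻ w, ((fun w => t + w) ⁻¹' S).indicator (dens m b) w
      = ∫⁻ u, ((fun w => t + w) ⁻¹' S).indicator (dens m b) (u - t) :=
        (lintegral_sub_right_eq_self _ t).symm
    _ ≤ ∫⁻ u, ENNReal.ofReal (Real.exp lam) * S.indicator (dens m b) u := by
        apply lintegral_mono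
        intro u
        simp only []
        by_cases hu : u ∈ S
        · have hmem : u - t ∈ (fun w => t + w) ⁻¹' S := by
            simp only [Set.mem_preimage, add_sub_cancel]
            exact hu
          rw [Set.indicator_of_mem hmem, Set.indicator_of_mem hu]
          exact dens_shift_le hb hbW t u ht
        · have hmem : u - t ∉ (fun w => t + w) ⁻¹' S := by
            simp only [Set.mem_preimage, add_sub_cancel]
            exact hu
          rw [Set.indicator_of_notMem hmem, Set.indicator_of_notMem hu]
          simp
    _ = ENNReal.ofReal (Real.exp lam) * ∫⁻ u, S.indicator (dens m b) u :=
        lintegral_const_mul' _ _ ENNReal.ofReal_ne_top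

lemma integrable_exp_neg_abs_div {b : ℝ} (hb : 0 < b) :
    Integrable (fun t : ℝ => Real.exp (-|t| / b)) := by
  have hIoi : IntegrableOn (fun t : ℝ => Real.exp (-|t| / b)) (Ioi 0) := by
    apply (exp_neg_integrableOn_Ioi 0 (show (0:ℝ) < 1/b by positivity)).congr_fun
      ?_ measurableSet_Ioi
    intro x hx
    show Real.exp (-(1/b) * x) = Real.exp (-|x| / b)
    rw [abs_of_pos hx]
    congr 1
    ring
  have hIic : IntegrableOn (fun t : ℝ => Real.exp (-|t| / b)) (Iic 0) := by
    have hm : MeasurableEmbedding fun x : ℝ => -x := (Homeomorph.neg ℝ).measurableEmbedding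
    rw [← Measure.map_neg_eq_self (volume : Measure ℝ), hm.integrableOn_map_iff]
    simp_rw [Function.comp_def, abs_neg, neg_preimage, neg_Iic, neg_zero]
    exact (integrableOn_Ici_iff_integrableOn_Ioi).mpr hIoi
  have h := hIic.union hIoi
  rwa [Iic_union_Ioi, integrableOn_univ] at h

lemma integral_Ioi_exp {b : ℝ} (hb : 0 < b) :
    ∫ x in Ioi (0:ℝ), Real.exp (-x / b) = b := by
  have h := integral_exp_neg_mul_rpow (p := 1) one_pos (b := 1/b) (by positivity)
  simp only [Real.rpow_one] at h
  have heq : (fun x : ℝ => Real.exp (-x / b)) = fun x : ℝ => Real.exp (-(1/b) * x) := by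
    funext x; congr 1; ring
  rw [heq, h]
  norm_num [Real.Gamma_two, Real.rpow_neg_one]

lemma integral_g {b : ℝ} (hb : 0 < b) :
    ∫ t : ℝ, (1 / (2 * b)) * Real.exp (-|t| / b) = 1 := by
  rw [MeasureTheory.integral_const_mul, integral_comp_abs (f := fun x => Real.exp (-x / b)),
    integral_Ioi_exp hb]
  field_simp

lemma lap_univ_le {m : ℕ} {b : ℝ} (hb : 0 < b) : lapPi m b Set.univ ≤ 1 := by
  have hg : Integrable (fun t : ℝ => (1 / (2 * b)) * Real.exp (-|t| / b)) :=
    (integrable_exp_neg_abs_div hb).const_mul _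
  have hint : Integrable (fun x : Fin m → ℝ => ∏ k, (1 / (2 * b)) * Real.exp (-|x k| / b)) :=
    Integrable.fintype_prod (f := fun _ t => (1 / (2 * b)) * Real.exp (-|t| / b)) fun _ => hg
  rw [lapPi_eq, withDensity_apply _ MeasurableSet.univ, Measure.restrict_univ]
  rw [show (dens m b) = fun x => ENNReal.ofReal (∏ k, (1 / (2 * b)) * Real.exp (-|x k| / b)) from rfl]
  rw [← MeasureTheory.ofReal_integral_eq_lintegral_ofReal hint ?_]
  · rw [integral_fintype_prod_volume_eq_prod (f := fun _ t => (1 / (2 * b)) * Real.exp (-|t| / b)),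
      Finset.prod_congr rfl fun k _ => integral_g hb]
    simp
  · filter_upwards with x
    positivity

lemma lap_isFiniteMeasure {m : ℕ} {b : ℝ} (hb : 0 < b) : IsFiniteMeasure (lapPi m b) :=
  ⟨lt_of_le_of_lt (lap_univ_le hb) ENNReal.one_lt_top⟩


variable {m : ℕ}

lemma measurable_addp : Measurable (fun p : (Fin m → ℝ) × (Fin m → ℝ) => p.1 + p.2) :=
  measurable_fst.add measurable_snd

lemma mconv_apply (μ ν : Measure (Fin m → ℝ)) [SFinite ν] {S : Set (Fin m → ℝ)}
    (hS : MeasurableSet S) :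
    mconv μ ν S = ∫⁻ x, ν {z | x + z ∈ S} ∂μ := by
  rw [mconv, Measure.map_apply measurable_addp hS,
    Measure.prod_apply (hS.preimage measurable_addp)]
  rfl

lemma mconv_apply_symm (μ ν : Measure (Fin m → ℝ)) [SFinite μ] [SFinite ν]
    {S : Set (Fin m → ℝ)} (hS : MeasurableSet S) :
    mconv μ ν S = ∫⁻ w, μ {v | v + w ∈ S} ∂ν := by
  rw [mconv, Measure.map_apply measurable_addp hS,
    Measure.prod_apply_symm (hS.preimage measurable_addp)]
  rfl

lemma lintegral_mconv (μ ν : Measure (Fin m → ℝ)) [SFinite μ] [SFinite ν]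
    {g : (Fin m → ℝ) → ENNReal} (hg : Measurable g) :
    ∫⁻ v, g v ∂(mconv μ ν) = ∫⁻ x, ∫⁻ z, g (x + z) ∂ν ∂μ := by
  rw [mconv, lintegral_map hg measurable_addp]
  exact lintegral_prod (fun a => g (a.1 + a.2)) ((hg.comp measurable_addp).aemeasurable)

/-- Key step: coupling transfer through additional Laplace noise. -/
lemma coupling_step {b lam W : ℝ} (hb : 0 < b) (hbW : W / b ≤ lam)
    (μ ν ζ : Measure (Fin m → ℝ)) [SFinite μ] [SFinite ν] [SFinite ζ]
    (γ : Measure ((Fin m → ℝ) × (Fin m → ℝ)))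
    (hγ1 : γ.map Prod.fst = μ) (hγ2 : γ.map Prod.snd = ν)
    (hγW : ∀ᵐ p ∂γ, l1norm (p.1 - p.2) ≤ W)
    {S : Set (Fin m → ℝ)} (hS : MeasurableSet S) :
    mconv (mconv μ ζ) (lapPi m b) S
      ≤ ENNReal.ofReal (Real.exp lam) * mconv (mconv ν ζ) (lapPi m b) S := by
  haveI : IsFiniteMeasure (lapPi m b) := lap_isFiniteMeasure hb
  set L := lapPi m b with hL
  have hA : MeasurableSet ((fun p : (Fin m → ℝ) × (Fin m → ℝ) => p.1 + p.2) ⁻¹' S) :=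
    hS.preimage measurable_addp
  have hg : Measurable (fun v : Fin m → ℝ => L {w | v + w ∈ S}) :=
    measurable_measure_prodMk_left hA
  have hG : Measurable (fun q : (Fin m → ℝ) × (Fin m → ℝ) => L {w | q.1 + q.2 + w ∈ S}) :=
    hg.comp measurable_addp
  set F : (Fin m → ℝ) → ENNReal := fun x => ∫⁻ z, L {w | x + z + w ∈ S} ∂ζ with hF
  have hFmeas : Measurable F := Measurable.lintegral_prod_right hG
  have key : ∀ μ' : Measure (Fin m → ℝ), SFinite μ' →
      mconv (mconv μ' ζ) L S = ∫⁻ x, F x ∂μ' := by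
    intro μ' hsf
    rw [mconv_apply (mconv μ' ζ) L hS, lintegral_mconv μ' ζ hg]
  have hF2 : Measurable (fun p : (Fin m → ℝ) × (Fin m → ℝ) => F p.2) :=
    hFmeas.comp measurable_snd
  rw [key μ ‹_›, key ν ‹_›, ← hγ1, ← hγ2,
    lintegral_map hFmeas measurable_fst, lintegral_map hFmeas measurable_snd,
    ← lintegral_const_mul _ hF2]
  apply lintegral_mono_ae
  filter_upwards [hγW] with p hp
  calc F p.1 = ∫⁻ z, L {w | p.1 + z + w ∈ S} ∂ζ := rfl
    _ ≤ ∫⁻ z, ENNReal.ofReal (Real.exp lam) * L {w | p.2 + z + w ∈ S} ∂ζ := by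
        apply lintegral_mono
        intro z
        simp only []
        have hset : {w | p.1 + z + w ∈ S}
            = (fun w => (p.1 - p.2) + w) ⁻¹' {w | p.2 + z + w ∈ S} := by
          ext w
          simp only [Set.mem_setOf_eq, Set.mem_preimage]
          have hrw : p.2 + z + (p.1 - p.2 + w) = p.1 + z + w := by abel
          rw [hrw]
        rw [hset]
        exact lap_shift hb hbW _ hp (hS.preimage (measurable_const_add _))
    _ = ENNReal.ofReal (Real.exp lam) * F p.2 := lintegral_const_mul' _ _ ENNReal.ofReal_ne_top

lemma l1norm_sub_comm (x y : Fin m → ℝ) : l1norm (x - y) = l1norm (y - x) := by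
  unfold l1norm
  exact Finset.sum_congr rfl fun k _ => by rw [Pi.sub_apply, Pi.sub_apply, abs_sub_comm]

lemma dp_step {b ε δ : ℝ} (hb : 0 < b)
    (fti ftj ζ : Measure (Fin m → ℝ))
    [IsProbabilityMeasure fti] [IsProbabilityMeasure ftj] [IsProbabilityMeasure ζ]
    (h1 : ∀ S : Set (Fin m → ℝ), MeasurableSet S →
      mconv fti ζ S ≤ ENNReal.ofReal (Real.exp ε) * mconv ftj ζ S + ENNReal.ofReal δ)
    {S : Set (Fin m → ℝ)} (hS : MeasurableSet S) :
    mconv (mconv fti ζ) (lapPi m b) S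
      ≤ ENNReal.ofReal (Real.exp ε) * mconv (mconv ftj ζ) (lapPi m b) S
        + ENNReal.ofReal δ := by
  haveI : IsFiniteMeasure (lapPi m b) := lap_isFiniteMeasure hb
  haveI hpi : IsProbabilityMeasure (mconv fti ζ) :=
    Measure.isProbabilityMeasure_map measurable_addp.aemeasurable
  haveI hpj : IsProbabilityMeasure (mconv ftj ζ) :=
    Measure.isProbabilityMeasure_map measurable_addp.aemeasurable
  have hB : MeasurableSet {p : (Fin m → ℝ) × (Fin m → ℝ) | p.2 + p.1 ∈ S} :=
    hS.preimage (measurable_snd.add measurable_fst)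
  have hh : Measurable fun w : Fin m → ℝ => (mconv ftj ζ) {v | v + w ∈ S} :=
    measurable_measure_prodMk_left (ν := mconv ftj ζ) hB
  calc mconv (mconv fti ζ) (lapPi m b) S
      = ∫⁻ w, (mconv fti ζ) {v | v + w ∈ S} ∂(lapPi m b) := mconv_apply_symm _ _ hS
    _ ≤ ∫⁻ w, (ENNReal.ofReal (Real.exp ε) * (mconv ftj ζ) {v | v + w ∈ S}
          + ENNReal.ofReal δ) ∂(lapPi m b) :=
        lintegral_mono fun w => h1 _ (hS.preimage (measurable_add_const w))
    _ = ENNReal.ofReal (Real.exp ε) * ∫⁻ w, (mconv ftj ζ) {v | v + w ∈ S} ∂(lapPi m b)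
          + ENNReal.ofReal δ * lapPi m b Set.univ := by
        rw [lintegral_add_right _ measurable_const, lintegral_const,
          lintegral_const_mul _ hh]
    _ ≤ ENNReal.ofReal (Real.exp ε) * mconv (mconv ftj ζ) (lapPi m b) S
          + ENNReal.ofReal δ := by
        rw [← mconv_apply_symm _ _ hS]
        refine add_le_add le_rfl ?_
        calc ENNReal.ofReal δ * lapPi m b Set.univ
            ≤ ENNReal.ofReal δ * 1 := mul_le_mul_right (lap_univ_le hb) _
          _ = ENNReal.ofReal δ := mul_one _


end PW

/-- **Privacy under approximations with Wasserstein distance** (Theorem 4.7): if the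
additive-noise mechanism with noise `ζ` is `(ε, δ)`-private for the approximating
distributions `f̃ᵢ, f̃ⱼ`, and each true distribution `f_θ` is within `∞`-Wasserstein
distance `W` of its approximation `f̃_θ`, then additionally adding independent
`Lapₘ(W/λ)` noise yields `(ε + 2λ, e^λ δ)`-privacy for the true distributions. -/
theorem privacy_under_wasserstein_approximations
    (m : ℕ) (hm : 1 ≤ m)
    (ε δ lam W : ℝ) (hε : 0 ≤ ε) (hδ : 0 ≤ δ) (hlam : 0 < lam) (hW : 0 < W)
    (fi fj fti ftj : Measure (Fin m → ℝ)) (ζ : Measure (Fin m → ℝ))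
    (hfi : IsProbabilityMeasure fi) (hfj : IsProbabilityMeasure fj)
    (hfti : IsProbabilityMeasure fti) (hftj : IsProbabilityMeasure ftj)
    (hζ : IsProbabilityMeasure ζ)
    (h1 : ∀ S : Set (Fin m → ℝ), MeasurableSet S →
      mconv fti ζ S ≤ ENNReal.ofReal (Real.exp ε) * mconv ftj ζ S
        + ENNReal.ofReal δ)
    (h2i : ∃ γ : Measure ((Fin m → ℝ) × (Fin m → ℝ)),
      IsCoupling γ fi fti ∧ ∀ᵐ xy ∂γ, l1norm (xy.1 - xy.2) ≤ W)
    (h2j : ∃ γ : Measure ((Fin m → ℝ) × (Fin m → ℝ)),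
      IsCoupling γ fj ftj ∧ ∀ᵐ xy ∂γ, l1norm (xy.1 - xy.2) ≤ W) :
    ∀ S : Set (Fin m → ℝ), MeasurableSet S →
      mconv (mconv fi ζ) (lapPi m (W / lam)) S
        ≤ ENNReal.ofReal (Real.exp (ε + 2 * lam))
            * mconv (mconv fj ζ) (lapPi m (W / lam)) S
          + ENNReal.ofReal (Real.exp lam * δ) := by
  haveI := hfi; haveI := hfj; haveI := hfti; haveI := hftj; haveI := hζ
  intro S hS
  have hb : 0 < W / lam := div_pos hW hlam
  have hbW : W / (W / lam) ≤ lam := by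
    rw [div_div_eq_mul_div, mul_comm, mul_div_assoc, div_self hW.ne', mul_one]
  obtain ⟨γi, ⟨hγi1, hγi2⟩, hγiW⟩ := h2i
  obtain ⟨γj, ⟨hγj1, hγj2⟩, hγjW⟩ := h2j
  have step1 := PW.coupling_step hb hbW fi fti ζ γi hγi1 hγi2 hγiW hS
  have hγj1' : (γj.map Prod.swap).map Prod.fst = ftj := by
    rw [Measure.map_map measurable_fst measurable_swap]
    exact hγj2
  have hγj2' : (γj.map Prod.swap).map Prod.snd = fj := by
    rw [Measure.map_map measurable_snd measurable_swap]
    exact hγj1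
  have hset : MeasurableSet {q : (Fin m → ℝ) × (Fin m → ℝ) | l1norm (q.1 - q.2) ≤ W} := by
    apply measurableSet_le _ measurable_const
    unfold l1norm
    apply Finset.measurable_sum
    intro k _
    exact (((measurable_pi_apply k).comp measurable_fst).sub
      ((measurable_pi_apply k).comp measurable_snd)).abs
  have hγjW' : ∀ᵐ q ∂(γj.map Prod.swap), l1norm (q.1 - q.2) ≤ W := by
    rw [MeasureTheory.ae_map_iff measurable_swap.aemeasurable hset]
    filter_upwards [hγjW] with p hp
    show l1norm (p.2 - p.1) ≤ W
    rw [PW.l1norm_sub_comm]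
    exact hp
  have step3 := PW.coupling_step hb hbW ftj fj ζ (γj.map Prod.swap) hγj1' hγj2' hγjW' hS
  have step2 := PW.dp_step hb fti ftj ζ h1 hS
  set L := lapPi m (W / lam)
  calc mconv (mconv fi ζ) L S
      ≤ ENNReal.ofReal (Real.exp lam) * mconv (mconv fti ζ) L S := step1
    _ ≤ ENNReal.ofReal (Real.exp lam) * (ENNReal.ofReal (Real.exp ε)
          * mconv (mconv ftj ζ) L S + ENNReal.ofReal δ) := mul_le_mul_right step2 _
    _ ≤ ENNReal.ofReal (Real.exp lam) * (ENNReal.ofReal (Real.exp ε)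
          * (ENNReal.ofReal (Real.exp lam) * mconv (mconv fj ζ) L S) + ENNReal.ofReal δ) := by
        exact mul_le_mul_right (add_le_add (mul_le_mul_right step3 _) le_rfl) _
    _ = ENNReal.ofReal (Real.exp (ε + 2 * lam)) * mconv (mconv fj ζ) L S
          + ENNReal.ofReal (Real.exp lam * δ) := by
        rw [mul_add, ← ENNReal.ofReal_mul (Real.exp_nonneg lam), ← mul_assoc, ← mul_assoc,
          ← ENNReal.ofReal_mul (Real.exp_nonneg lam), ← ENNReal.ofReal_mul (by positivity),
          ← Real.exp_add, ← Real.exp_add]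
        congr 3
        ring
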